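/- Any stable set consisting only of pendant vertices of a graph G is contained in some maximum stable (independent) set of G. -/
import Mathlib


open Finset SimpleGraph
open scoped Classical

variable {V : Type*}

/-- A stable (independent) set of vertices. -/
def stableSet (G : SimpleGraph V) (S : Finset V) : Prop :=
  ∀ u ∈ S, ∀ w ∈ S, ¬ G.Adj u w

/-- A maximum stable set. -/
def maxStableSet [Fintype V] (G : SimpleGraph V) (S : Finset V) : Prop :=
  stableSet G S ∧ ∀ S' : Finset V, stableSet G S' → S'.card ≤ S.card

/-- The independence number α(G). -/
noncomputable def alphaNum [Fintype V] (G : SimpleGraph V) : ℕ :=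
  ((Finset.univ : Finset V).powerset.filter (fun S => stableSet G S)).sup Finset.card

/-- core(G): the intersection of all maximum stable sets of G. -/
noncomputable def coreSet [Fintype V] (G : SimpleGraph V) : Finset V :=
  Finset.univ.filter (fun v => ∀ S : Finset V, maxStableSet G S → v ∈ S)

/-- A pendant vertex: a vertex with exactly one neighbor. -/
def pendant (G : SimpleGraph V) (v : V) : Prop :=
  ∃! w, G.Adj v w

/-- {A, B} is a bipartition of G into color classes. -/
def isBipartition [Fintype V] (G : SimpleGraph V) (A B : Finset V) : Prop :=
  Disjoint A B ∧ A ∪ B = Finset.univ ∧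
    ∀ u v, G.Adj u v → (u ∈ A ∧ v ∈ B) ∨ (u ∈ B ∧ v ∈ A)

lemma exists_maxStableSet [Fintype V] (G : SimpleGraph V) :
    ∃ S : Finset V, maxStableSet G S := by
  classical
  set T := ((Finset.univ : Finset V).powerset.filter (fun S => stableSet G S)) with hT
  have hne : T.Nonempty := ⟨∅, by simp [hT, stableSet]⟩
  obtain ⟨S, hS, hSsup⟩ := Finset.exists_mem_eq_sup T hne Finset.card
  simp only [hT, Finset.mem_filter] at hS
  refine ⟨S, hS.2, fun S' hS' => ?_⟩
  rw [← hSsup]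
  exact Finset.le_sup (by simp [hT, hS'])

theorem stmt0 [Fintype V] (G : SimpleGraph V) (A : Finset V)
    (hA : stableSet G A) (hp : ∀ v ∈ A, pendant G v) :
    ∃ S : Finset V, maxStableSet G S ∧ A ⊆ S := by
  classical
  obtain ⟨S, hSst, hSmax⟩ := exists_maxStableSet G
  -- unique neighbor function
  set f : V → V := fun v => if h : ∃! w, G.Adj v w then h.choose else v with hf
  have hadj : ∀ v ∈ A, G.Adj v (f v) := by
    intro v hv
    have h := hp v hv
    have hfv : f v = h.choose := dif_pos h
    rw [hfv]
    exact h.choose_spec.1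
  have huniq : ∀ v ∈ A, ∀ w, G.Adj v w → w = f v := by
    intro v hv w hw
    have h := hp v hv
    have hfv : f v = h.choose := dif_pos h
    rw [hfv]
    exact h.choose_spec.2 w hw
  set N : Finset V := A.image f with hN
  set S' : Finset V := (S \ N) ∪ A with hS'
  have hAN : ∀ v ∈ A, v ∉ N := by
    intro v hv hvN
    obtain ⟨u, hu, hfu⟩ := Finset.mem_image.mp hvN
    exact hA u hu v hv (hfu ▸ hadj u hu)
  have hstable : stableSet G S' := by
    intro u hu w hw hadjuw
    rcases Finset.mem_union.mp hu with hu' | hu' <;>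
      rcases Finset.mem_union.mp hw with hw' | hw'
    · exact hSst u (Finset.mem_sdiff.mp hu').1 w (Finset.mem_sdiff.mp hw').1 hadjuw
    · -- u ∈ S\N, w ∈ A : then u = f w ∈ N
      have : u = f w := huniq w hw' u hadjuw.symm
      exact (Finset.mem_sdiff.mp hu').2 (this ▸ Finset.mem_image_of_mem f hw')
    · have : w = f u := huniq u hu' w hadjuw
      exact (Finset.mem_sdiff.mp hw').2 (this ▸ Finset.mem_image_of_mem f hu')
    · exact hA u hu' w hw' hadjuw
  -- S' = (S\N) ∪ (A\S), disjoint
  have hSeq : S' = (S \ N) ∪ (A \ S) := by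
    apply Finset.ext
    intro x
    simp only [hS', Finset.mem_union, Finset.mem_sdiff]
    constructor
    · rintro (⟨hxS, hxN⟩ | hxA)
      · exact Or.inl ⟨hxS, hxN⟩
      · by_cases hxS : x ∈ S
        · exact Or.inl ⟨hxS, hAN x hxA⟩
        · exact Or.inr ⟨hxA, hxS⟩
    · rintro (⟨hxS, hxN⟩ | ⟨hxA, _⟩)
      · exact Or.inl ⟨hxS, hxN⟩
      · exact Or.inr hxA
  have hdisj : Disjoint (S \ N) (A \ S) := by
    apply Finset.disjoint_left.mpr
    intro x hx hx'
    exact (Finset.mem_sdiff.mp hx').2 (Finset.mem_sdiff.mp hx).1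
  have hcard1 : S'.card = (S \ N).card + (A \ S).card := by
    rw [hSeq, Finset.card_union_of_disjoint hdisj]
  -- card (S ∩ N) ≤ card (A \ S)
  have hsub : S ∩ N ⊆ (A \ S).image f := by
    intro w hw
    obtain ⟨hwS, hwN⟩ := Finset.mem_inter.mp hw
    obtain ⟨v, hv, hfv⟩ := Finset.mem_image.mp hwN
    have hvS : v ∉ S := fun hvS => hSst v hvS w hwS (hfv ▸ hadj v hv)
    exact Finset.mem_image.mpr ⟨v, Finset.mem_sdiff.mpr ⟨hv, hvS⟩, hfv⟩
  have hcard2 : (S ∩ N).card ≤ (A \ S).card :=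
    le_trans (Finset.card_le_card hsub) (Finset.card_image_le)
  have hScard : S.card ≤ S'.card := by
    have := Finset.card_inter_add_card_sdiff S N
    omega
  refine ⟨S', ⟨hstable, fun T hT => le_trans (hSmax T hT) hScard⟩, ?_⟩
  exact Finset.subset_union_right
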